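/- Let ψ be an Orlicz function with convex conjugate ψ*. Let T ∈ {1,…,n} and Z = (Z₁,…,Zₙ) be jointly distributed with E[Zᵢ] = 0 and Luxemburg norm ‖Zᵢ‖_ψ ≤ σ for all i. Then |E[Z_T]| ≤ σ · Σᵢ inf_{aᵢ∈ℝ} ‖P_{T|Z}(i|Z) − aᵢ‖_{ψ*}^A, where ‖X‖_{ψ*}^A = inf_{t>0}(1 + E[ψ*(t|X|)])/t is the Amemiya norm. -/

import Mathlib

open MeasureTheory Set ENNReal

/-- `ψ` is an Orlicz function. -/
def IsOrlicz (ψ : ℝ → ℝ≥0∞) : Prop :=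
  ψ 0 = 0 ∧
  (∀ u ∈ Set.Ici (0:ℝ), ∀ v ∈ Set.Ici (0:ℝ), ∀ c d : ℝ, 0 ≤ c → 0 ≤ d → c + d = 1 →
    ψ (c * u + d * v) ≤ ENNReal.ofReal c * ψ u + ENNReal.ofReal d * ψ v) ∧
  (∃ x : ℝ, 0 < x ∧ ψ x ≠ 0) ∧ (∃ x : ℝ, 0 < x ∧ ψ x ≠ ∞)

/-- The convex conjugate `ψ*(u) = sup_{v ≥ 0} (uv - ψ(v))`. -/
noncomputable def orliczConj (ψ : ℝ → ℝ≥0∞) (u : ℝ) : ℝ≥0∞ :=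
  ⨆ (v : ℝ) (_ : 0 ≤ v), (ENNReal.ofReal (u * v) - ψ v)

/-- The Luxemburg `ψ`-norm. -/
noncomputable def luxNorm {Ω : Type*} [MeasurableSpace Ω] (μ : MeasureTheory.Measure Ω)
    (ψ : ℝ → ℝ≥0∞) (X : Ω → ℝ) : ℝ≥0∞ :=
  sInf {e : ℝ≥0∞ | ∃ s : ℝ, 0 < s ∧ e = ENNReal.ofReal s ∧ ∫⁻ ω, ψ (|X ω| / s) ∂μ ≤ 1}

/-- The Amemiya norm `‖X‖_{ψ*}^A = inf_{t>0} (1 + E[ψ*(t|X|)])/t`. -/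
noncomputable def amemiyaNorm {Ω : Type*} [MeasurableSpace Ω] (μ : MeasureTheory.Measure Ω)
    (ψs : ℝ → ℝ≥0∞) (X : Ω → ℝ) : ℝ≥0∞ :=
  ⨅ (t : ℝ) (_ : 0 < t), (1 + ∫⁻ ω, ψs (t * |X ω|) ∂μ) / ENNReal.ofReal t

lemma young (ψ : ℝ → ℝ≥0∞) {u : ℝ} (v : ℝ) (hu : 0 ≤ u) :
    ENNReal.ofReal (u * v) ≤ ψ u + orliczConj ψ v := by
  have h : ENNReal.ofReal (v * u) - ψ u ≤ orliczConj ψ v := by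
    refine le_trans ?_ (le_iSup _ u)
    exact le_iSup (fun _ : 0 ≤ u => ENNReal.ofReal (v * u) - ψ u) hu
  rw [mul_comm]
  exact tsub_le_iff_left.mp h

lemma holder_step {Ω : Type*} [MeasurableSpace Ω] (μ : Measure Ω)
    (ψ : ℝ → ℝ≥0∞) (hψm : Measurable ψ)
    (f g : Ω → ℝ) (hf : Measurable f) {s : ℝ} (hs : 0 < s)
    (hcond : ∫⁻ ω, ψ (|f ω| / s) ∂μ ≤ 1) :
    ∫⁻ ω, ENNReal.ofReal (|f ω| * |g ω|) ∂μ ≤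
      ENNReal.ofReal s * amemiyaNorm μ (orliczConj ψ) g := by
  rw [amemiyaNorm, ENNReal.mul_iInf_of_ne (by simp [hs]) ENNReal.ofReal_ne_top]
  refine le_iInf fun t => ?_
  rw [ENNReal.mul_iInf_of_ne (by simp [hs]) ENNReal.ofReal_ne_top]
  refine le_iInf fun ht => ?_
  have key : ∀ ω, ENNReal.ofReal (|f ω| * |g ω|) ≤
      ENNReal.ofReal (s / t) * (ψ (|f ω| / s) + orliczConj ψ (t * |g ω|)) := by
    intro ω
    have heq : |f ω| * |g ω| = (s / t) * ((|f ω| / s) * (t * |g ω|)) := by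
      field_simp
    rw [heq, ENNReal.ofReal_mul (by positivity)]
    exact mul_le_mul_right (young ψ _ (by positivity)) _
  calc ∫⁻ ω, ENNReal.ofReal (|f ω| * |g ω|) ∂μ
      ≤ ∫⁻ ω, ENNReal.ofReal (s / t) * (ψ (|f ω| / s) + orliczConj ψ (t * |g ω|)) ∂μ :=
        lintegral_mono key
    _ = ENNReal.ofReal (s / t) *
        ∫⁻ ω, (ψ (|f ω| / s) + orliczConj ψ (t * |g ω|)) ∂μ :=
        lintegral_const_mul' _ _ ENNReal.ofReal_ne_top
    _ = ENNReal.ofReal (s / t) *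
        ((∫⁻ ω, ψ (|f ω| / s) ∂μ) + ∫⁻ ω, orliczConj ψ (t * |g ω|) ∂μ) := by
        rw [lintegral_add_left (show Measurable fun ω => ψ (|f ω| / s) from hψm.comp ((hf.abs).div_const s))]
    _ ≤ ENNReal.ofReal (s / t) *
        (1 + ∫⁻ ω, orliczConj ψ (t * |g ω|) ∂μ) := by
        exact mul_le_mul_right (add_le_add_left hcond _) _
    _ = ENNReal.ofReal s *
        ((1 + ∫⁻ ω, orliczConj ψ (t * |g ω|) ∂μ) / ENNReal.ofReal t) := by
        rw [ENNReal.ofReal_div_of_pos ht, div_eq_mul_inv, div_eq_mul_inv]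
        ring

lemma holder_lux {Ω : Type*} [MeasurableSpace Ω] (μ : Measure Ω)
    (ψ : ℝ → ℝ≥0∞) (hψm : Measurable ψ)
    (f g : Ω → ℝ) (hf : Measurable f) {σ : ℝ} (hσ : 0 < σ)
    (hlux : luxNorm μ ψ f ≤ ENNReal.ofReal σ) :
    ∫⁻ ω, ENNReal.ofReal (|f ω| * |g ω|) ∂μ ≤
      ENNReal.ofReal σ * amemiyaNorm μ (orliczConj ψ) g := by
  set A := amemiyaNorm μ (orliczConj ψ) g with hA
  have hS : ∀ e ∈ {e : ℝ≥0∞ | ∃ s : ℝ, 0 < s ∧ e = ENNReal.ofReal s ∧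
      ∫⁻ ω, ψ (|f ω| / s) ∂μ ≤ 1},
      ∫⁻ ω, ENNReal.ofReal (|f ω| * |g ω|) ∂μ ≤ e * A := by
    rintro e ⟨s, hs, rfl, hcond⟩
    exact holder_step μ ψ hψm f g hf hs hcond
  rcases eq_or_ne A ∞ with hAtop | hAtop
  · rw [hAtop, ENNReal.mul_top (by simp [hσ])]
    exact le_top
  rcases eq_or_ne A 0 with hA0 | hA0
  · have hlt : luxNorm μ ψ f < ∞ := lt_of_le_of_lt hlux ENNReal.ofReal_lt_top
    rw [luxNorm] at hlt
    have hne : {e : ℝ≥0∞ | ∃ s : ℝ, 0 < s ∧ e = ENNReal.ofReal s ∧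
        ∫⁻ ω, ψ (|f ω| / s) ∂μ ≤ 1}.Nonempty := by
      by_contra h
      rw [Set.not_nonempty_iff_eq_empty] at h
      simp [h] at hlt
    obtain ⟨e, he⟩ := hne
    have := hS e he
    rw [hA0, mul_zero] at this
    simpa using this.trans zero_le
  refine ENNReal.le_of_forall_pos_le_add fun ε hε _ => ?_
  set δ : ℝ≥0∞ := (ε : ℝ≥0∞) / A with hδ
  have hδ0 : δ ≠ 0 := by
    simp only [hδ, ne_eq, ENNReal.div_eq_zero_iff, hAtop, or_false]
    exact_mod_cast hε.ne'
  have hlt : luxNorm μ ψ f < ENNReal.ofReal σ + δ :=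
    lt_of_le_of_lt hlux (ENNReal.lt_add_right ENNReal.ofReal_ne_top hδ0)
  rw [luxNorm, sInf_lt_iff] at hlt
  obtain ⟨e, he, helt⟩ := hlt
  calc ∫⁻ ω, ENNReal.ofReal (|f ω| * |g ω|) ∂μ ≤ e * A := hS e he
    _ ≤ (ENNReal.ofReal σ + δ) * A := mul_le_mul_left helt.le _
    _ = ENNReal.ofReal σ * A + δ * A := by rw [add_mul]
    _ = ENNReal.ofReal σ * A + ε := by
        rw [hδ, ENNReal.div_mul_cancel hA0 hAtop]

noncomputable def mOf {Ω : Type*} (n : ℕ) (Z : Fin n → Ω → ℝ) : MeasurableSpace Ω :=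
  MeasurableSpace.comap (fun ω' => fun j => Z j ω') MeasurableSpace.pi

/-- Main theorem (Orlicz form): if `‖Zᵢ‖_ψ ≤ σ` and `E[Zᵢ] = 0` for all `i`, then for
any selection rule `T`,
`|E[Z_T]| ≤ σ Σᵢ inf_{aᵢ} ‖P_{T|Z}(i|Z) - aᵢ‖_{ψ*}^A`,
where `P_{T|Z}(i|Z)` is the conditional probability `P(T = i | Z)`. -/
theorem stmt16 {Ω : Type*} [MeasurableSpace Ω] (μ : Measure Ω) [IsProbabilityMeasure μ]
    (n : ℕ) (Z : Fin n → Ω → ℝ) (T : Ω → Fin n) (hT : Measurable T)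
    (hZm : ∀ i, Measurable (Z i)) (hZint : ∀ i, Integrable (Z i) μ)
    (hmean : ∀ i, ∫ ω, Z i ω ∂μ = 0)
    (ψ : ℝ → ℝ≥0∞) (hψ : IsOrlicz ψ) (hψm : Measurable ψ)
    (σ : ℝ) (hσ : 0 < σ)
    (hlux : ∀ i, luxNorm μ ψ (Z i) ≤ ENNReal.ofReal σ) :
    ENNReal.ofReal |∫ ω, Z (T ω) ω ∂μ| ≤
      ENNReal.ofReal σ *
        ∑ i : Fin n, ⨅ a : ℝ,
          amemiyaNorm μ (orliczConj ψ)
            (fun ω =>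
              (μ[(fun ω' => if T ω' = i then (1:ℝ) else 0) |
                MeasurableSpace.comap (fun ω' => fun j => Z j ω') MeasurableSpace.pi]) ω
              - a) := by
  classical
  have hm : mOf n Z ≤ _ :=
    Measurable.comap_le (measurable_pi_lambda (fun ω' => fun j => Z j ω') hZm)
  haveI hsf : SigmaFinite (μ.trim hm) := inferInstance
  -- indicator functions
  have hind_eq : ∀ i : Fin n, (fun ω' => if T ω' = i then (1:ℝ) else 0) =
      (T ⁻¹' {i}).indicator (fun _ => (1:ℝ)) := by
    intro i; funext ω; simp [Set.indicator_apply]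
  have hind_int : ∀ i : Fin n,
      Integrable (fun ω' => if T ω' = i then (1:ℝ) else 0) μ := by
    intro i; rw [hind_eq]
    exact (integrable_const 1).indicator (hT (measurableSet_singleton i))
  -- conditional probabilities
  have hP01 : ∀ i : Fin n, ∀ᵐ ω ∂μ,
      |(μ[(fun ω' => if T ω' = i then (1:ℝ) else 0)|mOf n Z]) ω| ≤ 1 := by
    intro i
    have h0 : 0 ≤ᵐ[μ] μ[(fun ω' => if T ω' = i then (1:ℝ) else 0)|mOf n Z] :=
      condExp_nonneg (ae_of_all μ fun ω => by dsimp; split <;> norm_num)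
    have h1 : μ[(fun ω' => if T ω' = i then (1:ℝ) else 0)|mOf n Z] ≤ᵐ[μ]
        μ[(fun _ : Ω => (1:ℝ))|mOf n Z] :=
      condExp_mono (hind_int i) (integrable_const 1)
        (ae_of_all μ fun ω => by dsimp; split <;> norm_num)
    rw [condExp_const hm] at h1
    filter_upwards [h0, h1] with ω hω0 hω1
    simp only [Pi.zero_apply] at hω0
    rw [abs_le]; exact ⟨by linarith, hω1⟩
  have hZsm : ∀ i, StronglyMeasurable[mOf n Z] (Z i) := by
    intro i
    have hZvec : Measurable[mOf n Z] (fun ω => fun j => Z j ω) :=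
      Measurable.of_comap_le le_rfl
    exact ((measurable_pi_apply i).comp hZvec).stronglyMeasurable
  have hPm : ∀ i : Fin n,
      AEStronglyMeasurable (μ[(fun ω' => if T ω' = i then (1:ℝ) else 0)|mOf n Z]) μ :=
    fun i => (stronglyMeasurable_condExp.mono hm).aestronglyMeasurable
  have hZP_int : ∀ (i : Fin n) (a : ℝ),
      Integrable (fun ω => Z i ω *
        ((μ[(fun ω' => if T ω' = i then (1:ℝ) else 0)|mOf n Z]) ω - a)) μ := by
    intro i a
    have h := Integrable.bdd_mul (c := 1 + |a|) (hZint i)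
      ((hPm i).sub aestronglyMeasurable_const)
      (by filter_upwards [hP01 i] with ω hω
          calc ‖(μ[(fun ω' => if T ω' = i then (1:ℝ) else 0)|mOf n Z]) ω - a‖
              ≤ |(μ[(fun ω' => if T ω' = i then (1:ℝ) else 0)|mOf n Z]) ω| + |a| :=
                abs_sub _ _
            _ ≤ 1 + |a| := by linarith)
    exact h.congr (ae_of_all μ fun ω => mul_comm _ _)
  have hkey : ∀ (i : Fin n) (a : ℝ),
      ∫ ω, (if T ω = i then Z i ω else 0) ∂μ =
      ∫ ω, Z i ω * ((μ[(fun ω' => if T ω' = i then (1:ℝ) else 0)|mOf n Z]) ω - a) ∂μ := by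
    intro i a
    have hfun : (fun ω => if T ω = i then Z i ω else 0) =
        (Z i) * (fun ω' => if T ω' = i then (1:ℝ) else 0) := by
      funext ω; dsimp; split <;> simp
    have hmul_int : Integrable ((Z i) * (fun ω' => if T ω' = i then (1:ℝ) else 0)) μ := by
      have h := Integrable.bdd_mul (c := 1) (hZint i)
        (hind_int i).aestronglyMeasurable
        (ae_of_all μ fun ω => by dsimp; split <;> simp)
      exact h.congr (ae_of_all μ fun ω => mul_comm _ _)
    have hpull := condExp_mul_of_stronglyMeasurable_left (hZsm i) hmul_int (hind_int i)
    have h1 : ∫ ω, (if T ω = i then Z i ω else 0) ∂μ =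
        ∫ ω, Z i ω * (μ[(fun ω' => if T ω' = i then (1:ℝ) else 0)|mOf n Z]) ω ∂μ := by
      rw [show (fun ω => if T ω = i then Z i ω else 0) =
        (Z i) * (fun ω' => if T ω' = i then (1:ℝ) else 0) from hfun]
      rw [← integral_condExp hm (f := (Z i) * (fun ω' => if T ω' = i then (1:ℝ) else 0))]
      exact integral_congr_ae hpull
    rw [h1]
    have h2 : ∫ ω, Z i ω *
        ((μ[(fun ω' => if T ω' = i then (1:ℝ) else 0)|mOf n Z]) ω - a) ∂μ =
        ∫ ω, Z i ω * (μ[(fun ω' => if T ω' = i then (1:ℝ) else 0)|mOf n Z]) ω ∂μ -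
        ∫ ω, Z i ω * a ∂μ := by
      rw [← integral_sub]
      · congr 1; funext ω; ring
      · have h := hZP_int i 0
        simpa using h
      · exact (hZint i).mul_const a
    rw [h2, integral_mul_const, hmean i, zero_mul, sub_zero]
  -- decomposition
  have hsummand_int : ∀ i : Fin n,
      Integrable (fun ω => if T ω = i then Z i ω else 0) μ := by
    intro i
    have : (fun ω => if T ω = i then Z i ω else 0) = (T ⁻¹' {i}).indicator (Z i) := by
      funext ω; simp [Set.indicator_apply]
    rw [this]
    exact (hZint i).indicator (hT (measurableSet_singleton i))
  have hdecomp : ∫ ω, Z (T ω) ω ∂μ =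
      ∑ i : Fin n, ∫ ω, (if T ω = i then Z i ω else 0) ∂μ := by
    rw [← integral_finset_sum _ fun i _ => hsummand_int i]
    refine integral_congr_ae (ae_of_all μ fun ω => ?_)
    show Z (T ω) ω = ∑ i : Fin n, if T ω = i then Z i ω else 0
    rw [Finset.sum_ite_eq]; simp
  -- per-index bound
  have perI : ∀ i : Fin n,
      ENNReal.ofReal |∫ ω, (if T ω = i then Z i ω else 0) ∂μ| ≤
      ENNReal.ofReal σ * ⨅ a : ℝ, amemiyaNorm μ (orliczConj ψ)
        (fun ω => (μ[(fun ω' => if T ω' = i then (1:ℝ) else 0)|mOf n Z]) ω - a) := by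
    intro i
    rw [ENNReal.mul_iInf_of_ne (by simp [hσ]) ENNReal.ofReal_ne_top]
    refine le_iInf fun a => ?_
    rw [hkey i a]
    set g : Ω → ℝ := fun ω => (μ[(fun ω' => if T ω' = i then (1:ℝ) else 0)|mOf n Z]) ω - a
      with hg
    calc ENNReal.ofReal |∫ ω, Z i ω * g ω ∂μ|
        ≤ ENNReal.ofReal (∫ ω, |Z i ω * g ω| ∂μ) := by
          apply ENNReal.ofReal_le_ofReal
          simpa only [Real.norm_eq_abs] using
            norm_integral_le_integral_norm (fun ω => Z i ω * g ω) (μ := μ)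
      _ = ∫⁻ ω, ENNReal.ofReal |Z i ω * g ω| ∂μ :=
          ofReal_integral_eq_lintegral_ofReal (hZP_int i a).abs
            (ae_of_all μ fun ω => abs_nonneg _)
      _ = ∫⁻ ω, ENNReal.ofReal (|Z i ω| * |g ω|) ∂μ := by
          simp_rw [abs_mul]
      _ ≤ ENNReal.ofReal σ * amemiyaNorm μ (orliczConj ψ) g :=
          holder_lux μ ψ hψm (Z i) g (hZm i) hσ (hlux i)
  calc ENNReal.ofReal |∫ ω, Z (T ω) ω ∂μ|
      = ENNReal.ofReal |∑ i : Fin n, ∫ ω, (if T ω = i then Z i ω else 0) ∂μ| := by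
        rw [hdecomp]
    _ ≤ ENNReal.ofReal (∑ i : Fin n, |∫ ω, (if T ω = i then Z i ω else 0) ∂μ|) :=
        ENNReal.ofReal_le_ofReal (Finset.abs_sum_le_sum_abs _ _)
    _ = ∑ i : Fin n, ENNReal.ofReal |∫ ω, (if T ω = i then Z i ω else 0) ∂μ| :=
        ENNReal.ofReal_sum_of_nonneg fun i _ => abs_nonneg _
    _ ≤ ∑ i : Fin n, ENNReal.ofReal σ * ⨅ a : ℝ, amemiyaNorm μ (orliczConj ψ)
          (fun ω => (μ[(fun ω' => if T ω' = i then (1:ℝ) else 0)|mOf n Z]) ω - a) :=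
        Finset.sum_le_sum fun i _ => perI i
    _ = ENNReal.ofReal σ * ∑ i : Fin n, ⨅ a : ℝ, amemiyaNorm μ (orliczConj ψ)
          (fun ω => (μ[(fun ω' => if T ω' = i then (1:ℝ) else 0)|mOf n Z]) ω - a) :=
        (Finset.mul_sum _ _ _).symm
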